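/- arXiv:1904.08339 — 2 statements merged into one kernel-verified Lean document; each statement's English description precedes it below -/
import Mathlib

section
/- Let (a_i, b_i, δ_i, σ_i) be generated by the mex rule: δ_{i+1} = mex({δ_1,…,δ_i} ∪ {σ_1,…,σ_i}), a_{i+1} = mex({a_1,…,a_i} ∪ {b_1,…,b_i}), b_{i+1} = a_{i+1} + δ_{i+1}, σ_{i+1} = a_{i+1} + b_{i+1} (using mex over positive integers). Then the sequences a and b are strictly increasing and complementary (their value sets partition the positive integers), and likewise the sequences δ and σ are complementary. -/
/-- mex over the positive integers: the least positive integer not in `S`. -/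
noncomputable def mexP (S : Set ℕ) : ℕ := sInf {n | 0 < n ∧ n ∉ S}

/-- One step of the mex rule: given the history of previous tuples
(a_1,b_1,δ_1,σ_1),…,(a_i,b_i,δ_i,σ_i), produce (a_{i+1},b_{i+1},δ_{i+1},σ_{i+1})
where δ_{i+1} = mex(Δ_i ∪ Σ_i), a_{i+1} = mex(A_i ∪ B_i), b_{i+1} = a_{i+1} + δ_{i+1},
σ_{i+1} = a_{i+1} + b_{i+1}. -/
noncomputable def step (h : List (ℕ × ℕ × ℕ × ℕ)) : ℕ × ℕ × ℕ × ℕ :=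
  let δ := mexP {m | ∃ t ∈ h, t.2.2.1 = m ∨ t.2.2.2 = m}
  let a := mexP {m | ∃ t ∈ h, t.1 = m ∨ t.2.1 = m}
  (a, a + δ, δ, a + (a + δ))

/-- The history of the first i tuples generated by the mex rule. -/
noncomputable def hist : ℕ → List (ℕ × ℕ × ℕ × ℕ)
  | 0 => []
  | i + 1 => hist i ++ [step (hist i)]

/-- a_i, b_i, δ_i, σ_i for i ≥ 1. -/
noncomputable def aSeq (i : ℕ) : ℕ := (step (hist (i - 1))).1
noncomputable def bSeq (i : ℕ) : ℕ := (step (hist (i - 1))).2.1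
noncomputable def dSeq (i : ℕ) : ℕ := (step (hist (i - 1))).2.2.1
noncomputable def sSeq (i : ℕ) : ℕ := (step (hist (i - 1))).2.2.2

def poolA (h : List (ℕ × ℕ × ℕ × ℕ)) : Set ℕ := {m | ∃ t ∈ h, t.1 = m ∨ t.2.1 = m}
def poolD (h : List (ℕ × ℕ × ℕ × ℕ)) : Set ℕ := {m | ∃ t ∈ h, t.2.2.1 = m ∨ t.2.2.2 = m}

lemma poolA_fin (h : List (ℕ × ℕ × ℕ × ℕ)) : (poolA h).Finite := by
  apply Set.Finite.subset (Set.finite_range (fun p : Fin h.length × Bool =>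
    if p.2 then (h.get p.1).1 else (h.get p.1).2.1))
  rintro m ⟨t, ht, h1 | h2⟩
  · obtain ⟨i, hi⟩ := List.mem_iff_get.mp ht
    exact ⟨(i, true), by simp [List.get_eq_getElem] at hi; simp [hi, h1]⟩
  · obtain ⟨i, hi⟩ := List.mem_iff_get.mp ht
    exact ⟨(i, false), by simp [List.get_eq_getElem] at hi; simp [hi, h2]⟩

lemma poolD_fin (h : List (ℕ × ℕ × ℕ × ℕ)) : (poolD h).Finite := by
  apply Set.Finite.subset (Set.finite_range (fun p : Fin h.length × Bool =>
    if p.2 then (h.get p.1).2.2.1 else (h.get p.1).2.2.2))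
  rintro m ⟨t, ht, h1 | h2⟩
  · obtain ⟨i, hi⟩ := List.mem_iff_get.mp ht
    exact ⟨(i, true), by simp [List.get_eq_getElem] at hi; simp [hi, h1]⟩
  · obtain ⟨i, hi⟩ := List.mem_iff_get.mp ht
    exact ⟨(i, false), by simp [List.get_eq_getElem] at hi; simp [hi, h2]⟩

lemma mexP_spec {S : Set ℕ} (hS : S.Finite) : 0 < mexP S ∧ mexP S ∉ S := by
  have hne : {n | 0 < n ∧ n ∉ S}.Nonempty := by
    have : ({n : ℕ | 0 < n} \ S).Infinite :=
      (Set.infinite_of_not_bddAbove (by exact not_bddAbove_Ioi (a := 0))).diff hS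
    obtain ⟨n, hn⟩ := this.nonempty
    exact ⟨n, hn.1, hn.2⟩
  exact Nat.sInf_mem hne

lemma mexP_le {S : Set ℕ} {m : ℕ} (hm : 0 < m) (hmS : m ∉ S) : mexP S ≤ m :=
  Nat.sInf_le ⟨hm, hmS⟩

lemma mexP_lt {S S' : Set ℕ} (hfin : S'.Finite) (hsub : S ⊆ S') (hmem : mexP S ∈ S') :
    mexP S < mexP S' := by
  obtain ⟨hpos, hnot⟩ := mexP_spec hfin
  exact lt_of_le_of_ne (mexP_le hpos (fun h => hnot (hsub h))) (fun h => hnot (h ▸ hmem))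

lemma aSeq_eq (i : ℕ) : aSeq i = mexP (poolA (hist (i - 1))) := rfl
lemma dSeq_eq (i : ℕ) : dSeq i = mexP (poolD (hist (i - 1))) := rfl
lemma bSeq_eq (i : ℕ) : bSeq i = aSeq i + dSeq i := rfl
lemma sSeq_eq (i : ℕ) : sSeq i = aSeq i + bSeq i := rfl

lemma hist_mono {i j : ℕ} (hij : i ≤ j) : ∀ t ∈ hist i, t ∈ hist j := by
  induction j with
  | zero =>
    intro t ht
    obtain rfl : i = 0 := Nat.le_zero.mp hij
    exact ht
  | succ j ih =>
    intro t ht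
    rcases Nat.lt_or_ge i (j+1) with h | h
    · exact List.mem_append_left _ (ih (by omega) t ht)
    · have : i = j + 1 := by omega
      subst this; exact ht

lemma step_mem_hist (i : ℕ) (hi : 1 ≤ i) : step (hist (i - 1)) ∈ hist i := by
  obtain ⟨j, rfl⟩ : ∃ j, i = j + 1 := ⟨i - 1, by omega⟩
  simp [hist]

lemma poolA_mono {i j : ℕ} (hij : i ≤ j) : poolA (hist i) ⊆ poolA (hist j) := by
  rintro m ⟨t, ht, hm⟩; exact ⟨t, hist_mono hij t ht, hm⟩

lemma poolD_mono {i j : ℕ} (hij : i ≤ j) : poolD (hist i) ⊆ poolD (hist j) := by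
  rintro m ⟨t, ht, hm⟩; exact ⟨t, hist_mono hij t ht, hm⟩

lemma aSeq_mem (i : ℕ) (hi : 1 ≤ i) : aSeq i ∈ poolA (hist i) :=
  ⟨step (hist (i-1)), step_mem_hist i hi, Or.inl rfl⟩
lemma bSeq_mem (i : ℕ) (hi : 1 ≤ i) : bSeq i ∈ poolA (hist i) :=
  ⟨step (hist (i-1)), step_mem_hist i hi, Or.inr rfl⟩
lemma dSeq_mem (i : ℕ) (hi : 1 ≤ i) : dSeq i ∈ poolD (hist i) :=
  ⟨step (hist (i-1)), step_mem_hist i hi, Or.inl rfl⟩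
lemma sSeq_mem (i : ℕ) (hi : 1 ≤ i) : sSeq i ∈ poolD (hist i) :=
  ⟨step (hist (i-1)), step_mem_hist i hi, Or.inr rfl⟩

lemma aSeq_pos (i : ℕ) : 0 < aSeq i := (mexP_spec (poolA_fin _)).1
lemma dSeq_pos (i : ℕ) : 0 < dSeq i := (mexP_spec (poolD_fin _)).1
lemma aSeq_not_mem (i : ℕ) : aSeq i ∉ poolA (hist (i - 1)) := (mexP_spec (poolA_fin _)).2
lemma dSeq_not_mem (i : ℕ) : dSeq i ∉ poolD (hist (i - 1)) := (mexP_spec (poolD_fin _)).2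

lemma aSeq_strict : StrictMonoOn aSeq {i | 1 ≤ i} := by
  intro i hi j hj hij
  exact mexP_lt (poolA_fin _) (poolA_mono (by omega))
    (poolA_mono (show i ≤ j - 1 by omega) (aSeq_mem i hi))

lemma dSeq_strict : StrictMonoOn dSeq {i | 1 ≤ i} := by
  intro i hi j hj hij
  exact mexP_lt (poolD_fin _) (poolD_mono (by omega))
    (poolD_mono (show i ≤ j - 1 by omega) (dSeq_mem i hi))

lemma hist_elem (i : ℕ) : ∀ t ∈ hist i, ∃ k, 1 ≤ k ∧ k ≤ i ∧ t = step (hist (k - 1)) := by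
  induction i with
  | zero => intro t ht; simp [hist] at ht
  | succ i ih =>
    intro t ht
    rcases List.mem_append.mp ht with h | h
    · obtain ⟨k, h1, h2, h3⟩ := ih t h
      exact ⟨k, h1, by omega, h3⟩
    · simp at h
      exact ⟨i + 1, by omega, le_refl _, by simp [h]⟩

/-- The mex-rule sequences a and b are strictly increasing and complementary,
and likewise δ and σ are complementary. -/
theorem mex_rule_complementary :
    StrictMonoOn aSeq {i | 1 ≤ i} ∧ StrictMonoOn bSeq {i | 1 ≤ i} ∧
    ({m | ∃ i, 1 ≤ i ∧ aSeq i = m} ∪ {m | ∃ i, 1 ≤ i ∧ bSeq i = m} = {m : ℕ | 0 < m}) ∧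
    Disjoint {m | ∃ i, 1 ≤ i ∧ aSeq i = m} {m | ∃ i, 1 ≤ i ∧ bSeq i = m} ∧
    ({m | ∃ i, 1 ≤ i ∧ dSeq i = m} ∪ {m | ∃ i, 1 ≤ i ∧ sSeq i = m} = {m : ℕ | 0 < m}) ∧
    Disjoint {m | ∃ i, 1 ≤ i ∧ dSeq i = m} {m | ∃ i, 1 ≤ i ∧ sSeq i = m} := by
  have hbmono : StrictMonoOn bSeq {i | 1 ≤ i} := by
    intro i hi j hj hij
    rw [bSeq_eq, bSeq_eq]
    exact Nat.add_lt_add (aSeq_strict hi hj hij) (dSeq_strict hi hj hij)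
  have haself : ∀ i, 1 ≤ i → i ≤ aSeq i := by
    intro i hi
    induction i with
    | zero => omega
    | succ i ih =>
      rcases Nat.eq_or_lt_of_le hi with h | h
      · have := aSeq_pos (i+1); omega
      · have h1 : 1 ≤ i := by omega
        have h2 := aSeq_strict (show i ∈ {i | 1 ≤ i} from h1)
          (show i + 1 ∈ {i | 1 ≤ i} from Nat.succ_le_succ (Nat.zero_le i)) (by omega)
        have h3 := ih h1; omega
  have hdself : ∀ i, 1 ≤ i → i ≤ dSeq i := by
    intro i hi
    induction i with
    | zero => omega
    | succ i ih =>
      rcases Nat.eq_or_lt_of_le hi with h | h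
      · have := dSeq_pos (i+1); omega
      · have h1 : 1 ≤ i := by omega
        have h2 := dSeq_strict (show i ∈ {i | 1 ≤ i} from h1)
          (show i + 1 ∈ {i | 1 ≤ i} from Nat.succ_le_succ (Nat.zero_le i)) (by omega)
        have h3 := ih h1; omega
  refine ⟨aSeq_strict, hbmono, ?_, ?_, ?_, ?_⟩
  · -- coverage A ∪ B
    apply Set.eq_of_subset_of_subset
    · rintro m (⟨i, hi, rfl⟩ | ⟨i, hi, rfl⟩)
      · exact aSeq_pos i
      · simp only [Set.mem_setOf_eq]; rw [bSeq_eq]; have := aSeq_pos i; omega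
    · intro m hm
      have hmem : m ∈ poolA (hist m) := by
        by_contra hnot
        have : aSeq (m + 1) ≤ m := by
          rw [aSeq_eq]; exact mexP_le hm (by simpa using hnot)
        have := haself (m + 1) (by omega); omega
      obtain ⟨t, ht, hcase⟩ := hmem
      obtain ⟨k, hk1, hk2, rfl⟩ := hist_elem m t ht
      rcases hcase with h | h
      · exact Or.inl ⟨k, hk1, h⟩
      · exact Or.inr ⟨k, hk1, h⟩
  · -- disjoint A B
    rw [Set.disjoint_left]
    rintro m ⟨i, hi, rfl⟩ ⟨j, hj, hji⟩
    rcases le_or_gt i j with h | h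
    · have h1 : aSeq i ≤ aSeq j := by
        rcases Nat.eq_or_lt_of_le h with h | h
        · exact le_of_eq (by rw [h])
        · exact le_of_lt (aSeq_strict hi (by exact hj) h)
      have := dSeq_pos j
      rw [bSeq_eq] at hji; omega
    · have hbm : bSeq j ∈ poolA (hist (i - 1)) :=
        poolA_mono (show j ≤ i - 1 by omega) (bSeq_mem j hj)
      rw [hji] at hbm
      exact aSeq_not_mem i hbm
  · -- coverage D ∪ S
    apply Set.eq_of_subset_of_subset
    · rintro m (⟨i, hi, rfl⟩ | ⟨i, hi, rfl⟩)
      · exact dSeq_pos i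
      · simp only [Set.mem_setOf_eq]; rw [sSeq_eq]; have := aSeq_pos i; omega
    · intro m hm
      have hmem : m ∈ poolD (hist m) := by
        by_contra hnot
        have : dSeq (m + 1) ≤ m := by
          rw [dSeq_eq]; exact mexP_le hm (by simpa using hnot)
        have := hdself (m + 1) (by omega); omega
      obtain ⟨t, ht, hcase⟩ := hmem
      obtain ⟨k, hk1, hk2, rfl⟩ := hist_elem m t ht
      rcases hcase with h | h
      · exact Or.inl ⟨k, hk1, h⟩
      · exact Or.inr ⟨k, hk1, h⟩
  · -- disjoint D S
    rw [Set.disjoint_left]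
    rintro m ⟨i, hi, rfl⟩ ⟨j, hj, hji⟩
    rcases le_or_gt i j with h | h
    · have h1 : dSeq i ≤ dSeq j := by
        rcases Nat.eq_or_lt_of_le h with h | h
        · exact le_of_eq (by rw [h])
        · exact le_of_lt (dSeq_strict hi (by exact hj) h)
      have := aSeq_pos j
      have hb := dSeq_pos j
      rw [sSeq_eq, bSeq_eq] at hji; omega
    · have hbm : sSeq j ∈ poolD (hist (i - 1)) :=
        poolD_mono (show j ≤ i - 1 by omega) (sSeq_mem j hj)
      rw [hji] at hbm
      exact dSeq_not_mem i hbm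
end

section
/- Let ν be the infinite 0-1 word obtained from the Tribonacci word (fixed point of 0↦01, 1↦02, 2↦0) by deleting all occurrences of the letter 2. Then ν equals the image of the Tribonacci word under the coding λ: 0↦0, 1↦1, 2↦ε, and the positions of 0's in ν are exactly the values of Δ^0 = X^1 − X^0 while the positions of 1's are the values of Δ^1 = X^2 − X^1, where X^j is the position sequence of letter j in the Tribonacci word. -/
/-- The Tribonacci substitution 0 ↦ 01, 1 ↦ 02, 2 ↦ 0, applied letterwise. -/
def tribSub (w : List ℕ) : List ℕ :=
  w.flatMap (fun j => if j + 1 < 3 then [0, j + 1] else [0])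

/-- The Tribonacci word (0-indexed). -/
def trib (n : ℕ) : ℕ := (tribSub^[n + 1] [0]).getD n 0

/-- The coding λ: 0 ↦ 0, 1 ↦ 1, 2 ↦ ε, applied letterwise. -/
def lam (w : List ℕ) : List ℕ := w.flatMap (fun j => if j = 2 then [] else [j])

/-- ν (0-indexed): the infinite word obtained from the Tribonacci word by deleting
all occurrences of the letter 2 (computed on a sufficiently long prefix). -/
def nu (n : ℕ) : ℕ := ((tribSub^[n + 2] [0]).filter (fun x => decide (x ≠ 2))).getD n 0

/-- X^j_n: the 1-based position of the n-th (1-based) occurrence of letter j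
in the Tribonacci word. -/
noncomputable def Xpos (j n : ℕ) : ℕ := Nat.nth (fun m => trib m = j) (n - 1) + 1

/-- Δ^j_n = X^{j+1}_n − X^j_n. -/
noncomputable def Δrow (j n : ℕ) : ℕ := Xpos (j + 1) n - Xpos j n

namespace TribAux

abbrev W (k : ℕ) : List ℕ := tribSub^[k] [0]

lemma W_succ (k : ℕ) : W (k + 1) = tribSub (W k) :=
  Function.iterate_succ_apply' tribSub k [0]

lemma tribSub_append (u v : List ℕ) : tribSub (u ++ v) = tribSub u ++ tribSub v := by
  simp [tribSub]

lemma tribSub_cons (a : ℕ) (t : List ℕ) :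
    tribSub (a :: t) = (if a + 1 < 3 then [0, a + 1] else [0]) ++ tribSub t := by
  simp [tribSub]

lemma length_tribSub (w : List ℕ) :
    (tribSub w).length = w.length + w.count 0 + w.count 1 := by
  induction w with
  | nil => rfl
  | cons a t ih =>
    rw [tribSub_cons]
    match a with
    | 0 => simp [List.count_cons]; omega
    | 1 => simp [List.count_cons]; omega
    | 2 => simp [List.count_cons]; omega
    | (n+3) => rw [if_neg (by omega)]; simp [List.count_cons]; omega

lemma count_tribSub (w : List ℕ) :
    (tribSub w).count 0 = w.length ∧ (tribSub w).count 1 = w.count 0 ∧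
      (tribSub w).count 2 = w.count 1 := by
  induction w with
  | nil => exact ⟨rfl, rfl, rfl⟩
  | cons a t ih =>
    rw [tribSub_cons]
    match a with
    | 0 => simp [List.count_cons]; omega
    | 1 => simp [List.count_cons]; omega
    | 2 => simp [List.count_cons]; omega
    | (n+3) => rw [if_neg (by omega)]; simp [List.count_cons]; omega

lemma tribSub_prefix {u v : List ℕ} (h : u <+: v) : tribSub u <+: tribSub v := by
  obtain ⟨t, rfl⟩ := h
  exact ⟨tribSub t, (tribSub_append u t).symm⟩

lemma W_prefix_succ (k : ℕ) : W k <+: W (k + 1) := by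
  induction k with
  | zero => exact ⟨[1], rfl⟩
  | succ k ih =>
    rw [W_succ, W_succ]
    exact tribSub_prefix ih

lemma W_prefix {k l : ℕ} (h : k ≤ l) : W k <+: W l := by
  induction l with
  | zero => simp_all
  | succ l ih =>
    rcases Nat.lt_or_ge k (l + 1) with h' | h'
    · exact (ih (by omega)).trans (W_prefix_succ l)
    · have : k = l + 1 := by omega
      subst this; exact List.prefix_refl _

lemma zero_mem_W (k : ℕ) : 0 ∈ W k := by
  have h : [0] <+: W k := W_prefix (Nat.zero_le k)
  exact h.subset (by simp)

lemma W_length (k : ℕ) : k < (W k).length := by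
  induction k with
  | zero => exact Nat.zero_lt_one
  | succ k ih =>
    rw [W_succ, length_tribSub]
    have : 0 < (W k).count 0 := List.count_pos_iff.mpr (zero_mem_W k)
    omega

lemma trib_eq_getElem {k n : ℕ} (h : n < (W k).length) : trib n = (W k)[n] := by
  have h1 : n < (W (n + 1)).length := lt_of_le_of_lt (Nat.le_succ n) (W_length (n + 1))
  have ht : trib n = (W (n + 1))[n] := by
    show (W (n+1)).getD n 0 = _
    exact List.getD_eq_getElem _ _ h1
  rcases Nat.le_total k (n + 1) with hk | hk
  · rw [ht, (W_prefix hk).getElem h]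
  · rw [ht, (W_prefix hk).getElem h1]

def Pref : ℕ → List ℕ
  | 0 => []
  | n + 1 => Pref n ++ [trib n]

@[simp] lemma Pref_length (n : ℕ) : (Pref n).length = n := by
  induction n with
  | zero => rfl
  | succ n ih => simp [Pref, ih]

lemma Pref_getElem (n i : ℕ) (h : i < n) :
    (Pref n)[i]'(by rw [Pref_length]; exact h) = trib i := by
  induction n with
  | zero => omega
  | succ n ih =>
    show (Pref n ++ [trib n])[i]'(by simp only [List.length_append, Pref_length, List.length_singleton]; omega) = trib i
    rcases Nat.lt_or_ge i n with h' | h'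
    · rw [List.getElem_append_left (by simpa using h')]
      exact ih h'
    · have : i = n := by omega
      subst this
      rw [List.getElem_append_right (by simp)]
      simp

lemma prefix_eq_Pref {u : List ℕ} {k : ℕ} (h : u <+: W k) : u = Pref u.length := by
  apply List.ext_getElem (by simp)
  intro i h1 h2
  rw [Pref_getElem _ i h1, h.getElem h1, ← trib_eq_getElem (lt_of_lt_of_le h1 (h.length_le))]

lemma Pref_prefix_W {n k : ℕ} (h : n ≤ (W k).length) : Pref n <+: W k := by
  have h1 : (W k).take n <+: W k := List.take_prefix _ _
  have h2 : (W k).take n = Pref ((W k).take n).length := prefix_eq_Pref h1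
  rw [List.length_take, min_eq_left h] at h2
  rw [← h2]; exact h1

def c (j n : ℕ) : ℕ := Nat.count (fun m => trib m = j) n

def cne (n : ℕ) : ℕ := Nat.count (fun m => trib m ≠ 2) n

lemma count_Pref (j n : ℕ) : (Pref n).count j = c j n := by
  induction n with
  | zero => simp [Pref, c]
  | succ n ih =>
    show (Pref n ++ [trib n]).count j = c j (n + 1)
    rw [List.count_append, ih]
    unfold c
    rw [Nat.count_succ]
    show Nat.count (fun m => trib m = j) n + List.count j [trib n] = _
    congr 1
    rcases eq_or_ne (trib n) j with h | h
    · simp [h]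
    · rw [if_neg h, List.count_singleton', if_neg h]

def af (n : ℕ) : ℕ := n + c 0 n + c 1 n

lemma lemA (n : ℕ) : tribSub (Pref n) = Pref (af n) := by
  have h1 : Pref n <+: W n := Pref_prefix_W (le_of_lt (W_length n))
  have h2 : tribSub (Pref n) <+: W (n + 1) := by
    rw [W_succ]; exact tribSub_prefix h1
  have h3 := prefix_eq_Pref h2
  rw [length_tribSub, Pref_length, count_Pref, count_Pref] at h3
  exact h3

lemma c_af (n : ℕ) : c 0 (af n) = n ∧ c 1 (af n) = c 0 n ∧ c 2 (af n) = c 1 n := by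
  have h := lemA n
  have h0 := count_Pref 0 (af n)
  have h1 := count_Pref 1 (af n)
  have h2 := count_Pref 2 (af n)
  rw [← h] at h0 h1 h2
  obtain ⟨t0, t1, t2⟩ := count_tribSub (Pref n)
  rw [t0, Pref_length] at h0
  rw [t1, count_Pref] at h1
  rw [t2, count_Pref] at h2
  exact ⟨h0.symm, h1.symm, h2.symm⟩

lemma af_block (n : ℕ) :
    Pref (af (n + 1)) = Pref (af n) ++ (if trib n + 1 < 3 then [0, trib n + 1] else [0]) := by
  rw [← lemA, ← lemA]
  show tribSub (Pref n ++ [trib n]) = _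
  rw [tribSub_append]
  congr 1
  simp [tribSub]

lemma af_succ (n : ℕ) :
    af (n + 1) = af n + (if trib n + 1 < 3 then [0, trib n + 1] else [0]).length := by
  have := congrArg List.length (af_block n)
  simpa using this

lemma trib_block (n i : ℕ)
    (h : i < (if trib n + 1 < 3 then [0, trib n + 1] else [0]).length) :
    trib (af n + i) = (if trib n + 1 < 3 then [0, trib n + 1] else [0]).getD i 0 := by
  have hlen : af n + i < af (n + 1) := by rw [af_succ]; omega
  have h1 := (Pref_getElem (af (n + 1)) (af n + i) hlen).symm
  rw [List.getElem_of_eq (af_block n)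
    (by rw [Pref_length]; exact hlen)] at h1
  rw [h1, List.getElem_append_right (by rw [Pref_length]; omega),
    List.getD_eq_getElem _ _ h]
  congr 1
  rw [Pref_length]
  omega

lemma trib_af (n : ℕ) : trib (af n) = 0 := by
  have := trib_block n 0 (by split <;> simp)
  rw [Nat.add_zero] at this
  rw [this]
  split <;> rfl

lemma trib_af_succ {n : ℕ} (h : trib n ≤ 1) : trib (af n + 1) = trib n + 1 := by
  have hif : trib n + 1 < 3 := by omega
  have := trib_block n 1 (by rw [if_pos hif]; simp)
  rw [this, if_pos hif]
  rfl

lemma af_strictMono : StrictMono af := by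
  apply strictMono_nat_of_lt_succ
  intro n
  have h0 : c 0 n ≤ c 0 (n + 1) := Nat.count_monotone _ (Nat.le_succ n)
  have h1 : c 1 n ≤ c 1 (n + 1) := Nat.count_monotone _ (Nat.le_succ n)
  unfold af; omega

lemma inf0 : {m | trib m = 0}.Infinite :=
  Set.infinite_of_injective_forall_mem af_strictMono.injective (fun n => trib_af n)

lemma g1_strictMono : StrictMono (fun n => af (af n) + 1) := fun a b hab => by
  simpa using af_strictMono (af_strictMono hab)

lemma inf1 : {m | trib m = 1}.Infinite := by
  apply Set.infinite_of_injective_forall_mem (f := fun n => af (af n) + 1)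
    g1_strictMono.injective
  intro n
  have h := trib_af n
  show trib (af (af n) + 1) = 1
  rw [trib_af_succ (by rw [h]; exact Nat.zero_le _), h]

lemma inf2 : {m | trib m = 2}.Infinite := by
  have hg : StrictMono (fun n => af (af (af n) + 1) + 1) := fun a b hab => by
    simpa using af_strictMono (g1_strictMono hab)
  apply Set.infinite_of_injective_forall_mem (f := fun n => af (af (af n) + 1) + 1)
    hg.injective
  intro n
  have h1 : trib (af (af n) + 1) = 1 := by
    rw [trib_af_succ (by rw [trib_af]; exact Nat.zero_le _), trib_af]
  show trib (af (af (af n) + 1) + 1) = 2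
  rw [trib_af_succ (by rw [h1]), h1]

lemma infne2 : {m | trib m ≠ 2}.Infinite :=
  inf0.mono (fun m hm => by simp only [Set.mem_setOf_eq] at *; omega)

lemma mem_W_lt {k : ℕ} : ∀ x ∈ W k, x < 3 := by
  induction k with
  | zero =>
    intro x hx
    have hx' : x ∈ ([0] : List ℕ) := hx
    have : x = 0 := by simpa using hx'
    omega
  | succ k ih =>
    rw [W_succ]
    intro x hx
    simp only [tribSub, List.mem_flatMap] at hx
    obtain ⟨j, hj, hxj⟩ := hx
    split at hxj <;> simp_all <;> omega

lemma trib_lt (n : ℕ) : trib n < 3 := by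
  have h : n < (W (n + 1)).length := lt_of_le_of_lt (Nat.le_succ n) (W_length (n + 1))
  rw [trib_eq_getElem h]
  exact mem_W_lt _ (List.getElem_mem h)

lemma cne_eq (n : ℕ) : cne n = c 0 n + c 1 n := by
  induction n with
  | zero => simp [cne, c]
  | succ n ih =>
    unfold cne c at *
    rw [Nat.count_succ, Nat.count_succ, Nat.count_succ, ih]
    have := trib_lt n
    interval_cases h : trib n <;> simp <;> omega

noncomputable def x (j k : ℕ) : ℕ := Nat.nth (fun m => trib m = j) k

lemma x0_eq (k : ℕ) : x 0 k = af k := by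
  have h := trib_af k
  have hc : c 0 (af k) = k := (c_af k).1
  have := Nat.nth_count (p := fun m => trib m = 0) h
  unfold c at hc
  rw [hc] at this
  exact this

lemma trib_x0 (k : ℕ) : trib (x 0 k) = 0 := Nat.nth_mem_of_infinite inf0 k
lemma trib_x1 (k : ℕ) : trib (x 1 k) = 1 := Nat.nth_mem_of_infinite inf1 k

lemma count_x0 (k : ℕ) : c 0 (x 0 k) = k := Nat.count_nth_of_infinite inf0 k
lemma count_x1 (k : ℕ) : c 1 (x 1 k) = k := Nat.count_nth_of_infinite inf1 k

lemma x1_eq (k : ℕ) : x 1 k = af (x 0 k) + 1 := by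
  have h1 : trib (af (x 0 k) + 1) = 1 := by
    rw [trib_af_succ (by rw [trib_x0]; exact Nat.zero_le _), trib_x0]
  have hc : c 1 (af (x 0 k) + 1) = k := by
    unfold c
    rw [Nat.count_succ, if_neg (by rw [trib_af]; omega)]
    show c 1 (af (x 0 k)) = k
    rw [(c_af _).2.1, count_x0]
  have := Nat.nth_count (p := fun m => trib m = 1) h1
  unfold c at hc
  rw [hc] at this
  exact this

lemma x2_eq (k : ℕ) : x 2 k = af (x 1 k) + 1 := by
  have h1 : trib (af (x 1 k) + 1) = 2 := by
    rw [trib_af_succ (by rw [trib_x1]), trib_x1]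
  have hc : c 2 (af (x 1 k) + 1) = k := by
    unfold c
    rw [Nat.count_succ, if_neg (by rw [trib_af]; omega)]
    show c 2 (af (x 1 k)) = k
    rw [(c_af _).2.2, count_x1]
  have := Nat.nth_count (p := fun m => trib m = 2) h1
  unfold c at hc
  rw [hc] at this
  exact this

lemma delta0 (k : ℕ) : Δrow 0 (k + 1) = cne (x 0 k) + 1 := by
  unfold Δrow Xpos
  show (Nat.nth (fun m => trib m = 1) (k + 1 - 1) + 1) -
      (Nat.nth (fun m => trib m = 0) (k + 1 - 1) + 1) = _
  simp only [Nat.add_sub_cancel]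
  have h1 : Nat.nth (fun m => trib m = 1) k = af (x 0 k) + 1 := x1_eq k
  have h0 : Nat.nth (fun m => trib m = 0) k = x 0 k := rfl
  rw [h1, h0, cne_eq]
  unfold af
  omega

lemma delta1 (k : ℕ) : Δrow 1 (k + 1) = cne (x 1 k) + 1 := by
  unfold Δrow Xpos
  show (Nat.nth (fun m => trib m = 2) (k + 1 - 1) + 1) -
      (Nat.nth (fun m => trib m = 1) (k + 1 - 1) + 1) = _
  simp only [Nat.add_sub_cancel]
  have h2 : Nat.nth (fun m => trib m = 2) k = af (x 1 k) + 1 := x2_eq k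
  have h1 : Nat.nth (fun m => trib m = 1) k = x 1 k := rfl
  rw [h2, h1, cne_eq]
  unfold af
  omega

lemma filter_Pref (n : ℕ) : (Pref n).filter (fun x => decide (x ≠ 2)) =
    (List.range (cne n)).map (fun i => trib (Nat.nth (fun m => trib m ≠ 2) i)) := by
  induction n with
  | zero => simp [Pref, cne]
  | succ n ih =>
    show (Pref n ++ [trib n]).filter _ = _
    rw [List.filter_append, ih]
    by_cases h : trib n = 2
    · have : cne (n + 1) = cne n := by
        unfold cne; rw [Nat.count_succ, if_neg (by simp [h])]; omega
      rw [this]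
      simp [h]
    · have hcs : cne (n + 1) = cne n + 1 := by
        unfold cne; rw [Nat.count_succ, if_pos h]
      have hn : Nat.nth (fun m => trib m ≠ 2) (cne n) = n := Nat.nth_count (p := fun m => trib m ≠ 2) h
      rw [hcs, List.range_succ, List.map_append]
      simp [h, hn]

lemma nu_eq (m : ℕ) : nu m = trib (Nat.nth (fun m => trib m ≠ 2) m) := by
  have hW : W (m + 2) = Pref ((W (m + 2)).length) := prefix_eq_Pref (List.prefix_refl _)
  have hcount : m < cne ((W (m + 2)).length) := by
    rw [cne_eq, ← count_Pref, ← count_Pref, ← hW]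
    have h2 : (W (m + 2)).count 0 = (W (m + 1)).length := by
      rw [W_succ]; exact (count_tribSub _).1
    have := W_length (m + 1)
    omega
  show ((W (m + 2)).filter (fun x => decide (x ≠ 2))).getD m 0 = _
  rw [hW, filter_Pref]
  rw [List.getD_eq_getElem _ _ (by simpa using hcount)]
  simp

end TribAux

open TribAux in
lemma lam_eq_filter (w : List ℕ) : lam w = w.filter (fun x => decide (x ≠ 2)) := by
  induction w with
  | nil => rfl
  | cons a t ih =>
    show (if a = 2 then [] else [a]) ++ lam t = _
    rw [ih]
    by_cases h : a = 2 <;> simp [h, List.filter_cons]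

/-- ν equals the image of the Tribonacci word under λ, and the (1-based) positions of
0's in ν are exactly the values of Δ^0 = X^1 − X^0, while the positions of 1's in ν
are exactly the values of Δ^1 = X^2 − X^1. -/
theorem nu_coding_and_positions :
    (∀ n, nu n = (lam (tribSub^[n + 2] [0])).getD n 0) ∧
    (∀ m, 0 < m →
      (nu (m - 1) = 0 ↔ ∃ n, 1 ≤ n ∧ Δrow 0 n = m) ∧
      (nu (m - 1) = 1 ↔ ∃ n, 1 ≤ n ∧ Δrow 1 n = m)) := by
  open TribAux in
  refine ⟨fun n => by rw [lam_eq_filter]; rfl, fun m hm => ⟨⟨?_, ?_⟩, ⟨?_, ?_⟩⟩⟩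
  · -- nu (m-1) = 0 → ∃ n
    intro h
    rw [nu_eq] at h
    set q := Nat.nth (fun m => trib m ≠ 2) (m - 1) with hq
    refine ⟨c 0 q + 1, by omega, ?_⟩
    have hx : x 0 (c 0 q) = q := Nat.nth_count (p := fun m => trib m = 0) h
    rw [delta0, hx]
    have : cne q = m - 1 := Nat.count_nth_of_infinite infne2 (m - 1)
    omega
  · -- ∃ n → nu (m-1) = 0
    rintro ⟨n, hn, hd⟩
    obtain ⟨k, rfl⟩ : ∃ k, n = k + 1 := ⟨n - 1, by omega⟩
    rw [delta0] at hd
    have hne : trib (x 0 k) ≠ 2 := by rw [trib_x0]; omega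
    have hnth : Nat.nth (fun m => trib m ≠ 2) (cne (x 0 k)) = x 0 k := Nat.nth_count (p := fun m => trib m ≠ 2) hne
    rw [nu_eq]
    have : m - 1 = cne (x 0 k) := by omega
    rw [this, hnth, trib_x0]
  · -- nu (m-1) = 1 → ∃ n
    intro h
    rw [nu_eq] at h
    set q := Nat.nth (fun m => trib m ≠ 2) (m - 1) with hq
    refine ⟨c 1 q + 1, by omega, ?_⟩
    have hx : x 1 (c 1 q) = q := Nat.nth_count (p := fun m => trib m = 1) h
    rw [delta1, hx]
    have : cne q = m - 1 := Nat.count_nth_of_infinite infne2 (m - 1)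
    omega
  · -- ∃ n → nu (m-1) = 1
    rintro ⟨n, hn, hd⟩
    obtain ⟨k, rfl⟩ : ∃ k, n = k + 1 := ⟨n - 1, by omega⟩
    rw [delta1] at hd
    have hne : trib (x 1 k) ≠ 2 := by rw [trib_x1]; omega
    have hnth : Nat.nth (fun m => trib m ≠ 2) (cne (x 1 k)) = x 1 k := Nat.nth_count (p := fun m => trib m ≠ 2) hne
    rw [nu_eq]
    have : m - 1 = cne (x 1 k) := by omega
    rw [this, hnth, trib_x1]
end
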